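/- Let H₀ ∈ (0,1), H₁,…,H_d ∈ (0,1), and μ(dξ) = C ∏_{i=1}^d |ξ_i|^{1-2H_i} dξ on ℝ^d with C > 0. Then ∫_{ℝ^d} (1 + |ξ|^{4H₀})^{-1} ∏_{i=1}^d |ξ_i|^{1-2H_i} dξ < ∞ if and only if 2H₀ + Σ_{i=1}^d H_i > d. -/

import Mathlib

open MeasureTheory

open Set Real
open scoped ENNReal


lemma meas_abs_rpow (a : ℝ) : Measurable fun x : ℝ => |x| ^ a := measurable_id.abs.pow measurable_const

lemma intOn_abs_rpow {a : ℝ} (ha : -1 < a) :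
    IntegrableOn (fun x : ℝ => |x| ^ a) (Set.Ioo (-1:ℝ) 1) := by
  have h1 : IntegrableOn (fun x : ℝ => |x| ^ a) (Set.Ioo (0:ℝ) 1) := by
    refine ((intervalIntegral.integrableOn_Ioo_rpow_iff one_pos).2 ha).congr_fun
      (fun x hx => ?_) measurableSet_Ioo
    rw [abs_of_pos hx.1]
  have h2 : IntegrableOn (fun x : ℝ => |x| ^ a) (Set.Ioo (-1:ℝ) 0) := by
    rw [IntegrableOn, ← Measure.map_neg_eq_self (volume : Measure ℝ)]
    have m : MeasurableEmbedding (Neg.neg : ℝ → ℝ) :=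
      (Homeomorph.neg ℝ).measurableEmbedding
    refine (m.integrableOn_map_iff (f := fun x : ℝ => |x| ^ a)
      (s := Set.Ioo (-1:ℝ) 0) (μ := volume)).mpr ?_
    have : ((Neg.neg : ℝ → ℝ) ⁻¹' Set.Ioo (-1:ℝ) 0) = Set.Ioo (0:ℝ) 1 := by
      ext x; simp [neg_lt, lt_neg, and_comm]
    simpa [Function.comp_def, abs_neg, this] using h1
  have h3 : IntegrableOn (fun x : ℝ => |x| ^ a) ({0} : Set ℝ) := by
    rw [IntegrableOn, Measure.restrict_eq_zero.mpr (by simp)]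
    exact integrable_zero_measure
  refine ((h2.union h1).union h3).mono_set ?_
  intro x hx
  rcases lt_trichotomy x 0 with h | h | h
  · exact Or.inl (Or.inl ⟨hx.1, h⟩)
  · exact Or.inr (by simp [h])
  · exact Or.inl (Or.inr ⟨h, hx.2⟩)

lemma lint_abs_rpow {a : ℝ} (ha : -1 < a) :
    ∫⁻ x : ℝ in Set.Ioo (-1:ℝ) 1, ENNReal.ofReal (|x| ^ a) < ⊤ := by
  have h := (intOn_abs_rpow ha).hasFiniteIntegral
  rwa [hasFiniteIntegral_iff_ofReal ?_] at h
  exact Filter.Eventually.of_forall fun x => rpow_nonneg (abs_nonneg x) a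



variable {d : ℕ}

lemma meas_w (a : Fin d → ℝ) :
    Measurable fun ξ : EuclideanSpace ℝ (Fin d) => ∏ i, ENNReal.ofReal (|ξ i| ^ a i) := by
  apply Finset.measurable_prod
  intro i _
  exact ENNReal.measurable_ofReal.comp
    (((EuclideanSpace.proj (𝕜 := ℝ) i).continuous.measurable).abs.pow measurable_const)

lemma scaling (a : Fin d → ℝ) {R : ℝ} (hR : 0 < R) :
    ∫⁻ ξ in Metric.ball (0 : EuclideanSpace ℝ (Fin d)) R, ∏ i, ENNReal.ofReal (|ξ i| ^ a i)
      = ENNReal.ofReal (R ^ ((d:ℝ) + ∑ i, a i)) *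
        ∫⁻ ξ in Metric.ball (0 : EuclideanSpace ℝ (Fin d)) 1, ∏ i, ENNReal.ofReal (|ξ i| ^ a i) := by
  set E := EuclideanSpace ℝ (Fin d)
  set w : E → ℝ≥0∞ := fun ξ => ∏ i, ENNReal.ofReal (|ξ i| ^ a i) with hw
  have hwm : Measurable w := meas_w a
  have hsm : Measurable fun x : E => R • x := measurable_const_smul R
  have hfin : Module.finrank ℝ E = d := finrank_euclideanSpace_fin
  have hmap : Measure.map (fun x : E => R • x) volume
      = ENNReal.ofReal (|(R ^ d)⁻¹|) • volume := by
    have := Measure.map_addHaar_smul (volume : Measure E) (ne_of_gt hR)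
    rwa [hfin] at this
  have hpre : (fun x : E => R • x) ⁻¹' Metric.ball (0 : E) R = Metric.ball (0 : E) 1 := by
    ext x
    simp only [Set.mem_preimage, Metric.mem_ball, dist_zero_right, norm_smul,
      Real.norm_eq_abs, abs_of_pos hR]
    constructor
    · intro h; nlinarith [abs_nonneg R]
    · intro h; nlinarith
  have hcomp : ∀ x : E, w (R • x) = ENNReal.ofReal (R ^ (∑ i, a i)) * w x := by
    intro x
    have : ∀ i, |(R • x) i| ^ a i = R ^ a i * |x i| ^ a i := by
      intro i
      have : (R • x) i = R * x i := rfl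
      rw [this, abs_mul, abs_of_pos hR, Real.mul_rpow hR.le (abs_nonneg _)]
    simp_rw [hw, this, ENNReal.ofReal_mul (Real.rpow_nonneg hR.le _), Finset.prod_mul_distrib]
    rw [← ENNReal.ofReal_prod_of_nonneg (fun i _ => Real.rpow_nonneg hR.le _),
      ← Real.rpow_sum_of_pos hR]
  have key : ∫⁻ ξ in Metric.ball (0 : E) R, w ξ ∂(Measure.map (fun x : E => R • x) volume)
      = ENNReal.ofReal (R ^ (∑ i, a i)) * ∫⁻ ξ in Metric.ball (0 : E) 1, w ξ := by
    rw [Measure.restrict_map hsm Metric.isOpen_ball.measurableSet, lintegral_map hwm hsm, hpre]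
    simp_rw [hcomp]
    rw [lintegral_const_mul' _ _ ENNReal.ofReal_ne_top]
  rw [hmap, Measure.restrict_smul, lintegral_smul_measure] at key
  have hRd : (0:ℝ) < R ^ d := pow_pos hR d
  have hC : ENNReal.ofReal (|(R ^ d)⁻¹|) = (ENNReal.ofReal (R ^ d))⁻¹ := by
    rw [abs_of_pos (by positivity), ENNReal.ofReal_inv_of_pos hRd]
  rw [hC] at key
  have hne : ENNReal.ofReal (R ^ d) ≠ 0 := by
    simp [ENNReal.ofReal_eq_zero, not_le, hRd]
  have htop : ENNReal.ofReal (R ^ d) ≠ ⊤ := ENNReal.ofReal_ne_top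
  calc ∫⁻ ξ in Metric.ball (0 : E) R, w ξ
      = ENNReal.ofReal (R ^ d) * ((ENNReal.ofReal (R ^ d))⁻¹ *
          ∫⁻ ξ in Metric.ball (0 : E) R, w ξ) := by
        rw [← mul_assoc, ENNReal.mul_inv_cancel hne htop, one_mul]
    _ = ENNReal.ofReal (R ^ d) * (ENNReal.ofReal (R ^ (∑ i, a i)) *
          ∫⁻ ξ in Metric.ball (0 : E) 1, w ξ) := by rw [← key, smul_eq_mul]
    _ = ENNReal.ofReal (R ^ ((d:ℝ) + ∑ i, a i)) *
          ∫⁻ ξ in Metric.ball (0 : E) 1, w ξ := by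
        rw [← mul_assoc, ← ENNReal.ofReal_mul hRd.le, ← Real.rpow_natCast R d,
          ← Real.rpow_add hR]

lemma V_lt_top (a : Fin d → ℝ) (ha : ∀ i, -1 < a i) :
    ∫⁻ ξ in Metric.ball (0 : EuclideanSpace ℝ (Fin d)) 1,
      ∏ i, ENNReal.ofReal (|ξ i| ^ a i) < ⊤ := by
  classical
  set g : Fin d → ℝ → ℝ := fun i x => Set.indicator (Set.Ioo (-1:ℝ) 1) (fun y => |y| ^ a i) x
    with hg
  have hgint : ∀ i, Integrable (g i) := by
    intro i
    exact (intOn_abs_rpow (ha i)).integrable_indicator measurableSet_Ioo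
  have hGint : Integrable (fun x : Fin d → ℝ => ∏ i, g i (x i)) :=
    Integrable.fintype_prod hgint
  have hmp := EuclideanSpace.volume_preserving_symm_measurableEquiv_toLp (Fin d)
  have hGE : Integrable (fun ξ : EuclideanSpace ℝ (Fin d) =>
      ∏ i, g i (ξ i)) := by
    have := (hmp.integrable_comp_emb (MeasurableEquiv.toLp 2 (Fin d → ℝ)).symm.measurableEmbedding).mpr hGint
    exact this
  have hnn : 0 ≤ᵐ[(volume : Measure (EuclideanSpace ℝ (Fin d)))]
      fun ξ : EuclideanSpace ℝ (Fin d) => ∏ i, g i (ξ i) := by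
    refine Filter.Eventually.of_forall fun ξ => Finset.prod_nonneg fun i _ => ?_
    exact Set.indicator_nonneg (fun y _ => rpow_nonneg (abs_nonneg y) _) _
  have hfin : ∫⁻ ξ : EuclideanSpace ℝ (Fin d),
      ENNReal.ofReal (∏ i, g i (ξ i)) < ⊤ := by
    have := hGE.hasFiniteIntegral
    rwa [hasFiniteIntegral_iff_ofReal hnn] at this
  refine lt_of_le_of_lt ?_ hfin
  refine le_trans (setLIntegral_mono ?_ ?_) (setLIntegral_le_lintegral _ _)
  · exact ENNReal.measurable_ofReal.comp (by
      apply Finset.measurable_prod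
      intro i _
      exact (Measurable.indicator (measurable_id.abs.pow measurable_const) measurableSet_Ioo).comp
        (EuclideanSpace.proj (𝕜 := ℝ) i).continuous.measurable)
  · intro ξ hξ
    have hcoord : ∀ i, ξ i ∈ Set.Ioo (-1:ℝ) 1 := by
      intro i
      have h1 : |ξ i| ≤ ‖ξ‖ := by
        rw [EuclideanSpace.norm_eq, ← Real.sqrt_sq_eq_abs]
        apply Real.sqrt_le_sqrt
        simp only [Real.norm_eq_abs, sq_abs]
        exact Finset.single_le_sum (f := fun j => ξ j ^ 2) (fun j _ => sq_nonneg _)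
          (Finset.mem_univ i)
      have h2 : ‖ξ‖ < 1 := by simpa [Metric.mem_ball, dist_zero_right] using hξ
      constructor <;> [skip; skip] <;> cases' abs_lt.mp (lt_of_le_of_lt h1 h2) with hl hr
      · exact hl
      · exact hr
    rw [ENNReal.ofReal_prod_of_nonneg (fun i _ =>
      Set.indicator_nonneg (fun y _ => rpow_nonneg (abs_nonneg y) _) _)]
    apply le_of_eq
    refine Finset.prod_congr rfl fun i _ => ?_
    rw [Set.indicator_of_mem (hcoord i)]

lemma V_pos (hd : 0 < d) (a : Fin d → ℝ) :
    0 < ∫⁻ ξ in Metric.ball (0 : EuclideanSpace ℝ (Fin d)) 1,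
      ∏ i, ENNReal.ofReal (|ξ i| ^ a i) := by
  set E := EuclideanSpace ℝ (Fin d)
  set w : E → ℝ≥0∞ := fun ξ => ∏ i, ENNReal.ofReal (|ξ i| ^ a i) with hw
  have hwm : Measurable w := meas_w a
  rw [pos_iff_ne_zero]
  intro h0
  have hae : w =ᵐ[volume.restrict (Metric.ball (0:E) 1)] 0 :=
    (lintegral_eq_zero_iff hwm).mp h0
  have hN : (volume : Measure E) {ξ : E | ∃ i, ξ i = 0} = 0 := by
    have : {ξ : E | ∃ i, ξ i = 0} = ⋃ i, {ξ : E | ξ i = 0} := by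
      ext ξ; simp
    rw [this]
    refine measure_iUnion_null fun i => ?_
    have hker : {ξ : E | ξ i = 0} =
        (LinearMap.ker (EuclideanSpace.projₗ (𝕜 := ℝ) (ι := Fin d) i) : Set E) := by
      ext ξ; simp only [SetLike.mem_coe, LinearMap.mem_ker, Set.mem_setOf_eq]; exact Iff.rfl
    rw [hker]
    apply Measure.addHaar_submodule
    intro htop
    have h1 : (EuclideanSpace.single i (1:ℝ) : E) ∈
        LinearMap.ker (EuclideanSpace.projₗ (𝕜 := ℝ) (ι := Fin d) i) := by
      rw [htop]; trivial
    simp [LinearMap.mem_ker] at h1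
  have hsub : Metric.ball (0:E) 1 \ {ξ : E | ∃ i, ξ i = 0} ⊆
      {ξ : E | w ξ ≠ 0} ∩ Metric.ball (0:E) 1 := by
    intro ξ hξ
    refine ⟨?_, hξ.1⟩
    have hnz : ∀ i, ξ i ≠ 0 := by
      intro i hi
      exact hξ.2 ⟨i, hi⟩
    simp only [Set.mem_setOf_eq, hw]
    rw [Finset.prod_ne_zero_iff]
    intro i _
    simp only [ne_eq, ENNReal.ofReal_eq_zero, not_le]
    exact Real.rpow_pos_of_pos (abs_pos.mpr (hnz i)) _
  have hzero : (volume : Measure E) ({ξ : E | w ξ ≠ 0} ∩ Metric.ball (0:E) 1) = 0 := by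
    have h1 := ae_iff.mp hae
    simp only [Pi.zero_apply] at h1
    have hms : MeasurableSet {ξ : E | ¬ w ξ = 0} :=
      (hwm (measurableSet_singleton (0:ℝ≥0∞))).compl
    rwa [Measure.restrict_apply hms] at h1
  have hball : (volume : Measure E) (Metric.ball (0:E) 1 \ {ξ : E | ∃ i, ξ i = 0})
      = volume (Metric.ball (0:E) 1) := measure_diff_null hN
  have hpos : 0 < (volume : Measure E) (Metric.ball (0:E) 1) :=
    Metric.measure_ball_pos _ _ one_pos
  have := measure_mono_null hsub hzero
  rw [hball] at this
  exact absurd this (ne_of_gt hpos)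


lemma lint_rpow_Ioo {q : ℝ} (hq : -1 < q) :
    ∫⁻ t : ℝ in Set.Ioo (0:ℝ) 1, ENNReal.ofReal (t ^ q) < ⊤ := by
  have h := ((intervalIntegral.integrableOn_Ioo_rpow_iff one_pos).2 hq).hasFiniteIntegral
  rwa [hasFiniteIntegral_iff_ofReal ?_] at h
  filter_upwards [ae_restrict_mem measurableSet_Ioo] with t ht
  exact rpow_nonneg ht.1.le q

lemma K_iff {p : ℝ} (hp : 0 < p) :
    (∫⁻ t : ℝ in Set.Ioo (0:ℝ) 1, ENNReal.ofReal ((t⁻¹ - 1) ^ p) < ⊤) ↔ p < 1 := by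
  constructor
  · intro hfin
    by_contra hp1
    push_neg at hp1
    -- restrict to (0, 1/2)
    have hsub : Set.Ioo (0:ℝ) 2⁻¹ ⊆ Set.Ioo (0:ℝ) 1 := Set.Ioo_subset_Ioo le_rfl (by norm_num)
    have hfin2 : ∫⁻ t : ℝ in Set.Ioo (0:ℝ) 2⁻¹, ENNReal.ofReal ((t⁻¹ - 1) ^ p) < ⊤ :=
      lt_of_le_of_lt (lintegral_mono' (Measure.restrict_mono hsub le_rfl) le_rfl) hfin
    have hmeas : Measurable fun t : ℝ => (t⁻¹ - 1) ^ p :=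
      (measurable_inv.sub_const 1).pow measurable_const
    have hbound : ∀ t ∈ Set.Ioo (0:ℝ) 2⁻¹,
        ENNReal.ofReal (t ^ (-p)) ≤ ENNReal.ofReal ((2:ℝ) ^ p) * ENNReal.ofReal ((t⁻¹ - 1) ^ p) := by
      intro t ht
      rw [← ENNReal.ofReal_mul (by positivity)]
      apply ENNReal.ofReal_le_ofReal
      have ht0 : (0:ℝ) < t := ht.1
      have h2 : (2:ℝ) ≤ t⁻¹ := by
        rw [le_inv_comm₀ (by norm_num) ht0]
        exact ht.2.le
      have hb : t⁻¹ ≤ 2 * (t⁻¹ - 1) := by linarith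
      calc t ^ (-p) = (t⁻¹) ^ p := by
            rw [Real.inv_rpow ht0.le, ← Real.rpow_neg ht0.le]
        _ ≤ (2 * (t⁻¹ - 1)) ^ p := Real.rpow_le_rpow (by positivity) hb hp.le
        _ = 2 ^ p * (t⁻¹ - 1) ^ p := Real.mul_rpow (by norm_num) (by nlinarith)
    have hfin3 : ∫⁻ t : ℝ in Set.Ioo (0:ℝ) 2⁻¹, ENNReal.ofReal (t ^ (-p)) < ⊤ := by
      refine lt_of_le_of_lt (setLIntegral_mono (by fun_prop) hbound) ?_
      rw [lintegral_const_mul' _ _ ENNReal.ofReal_ne_top]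
      exact ENNReal.mul_lt_top ENNReal.ofReal_lt_top hfin2
    have hint : IntegrableOn (fun t : ℝ => t ^ (-p)) (Set.Ioo (0:ℝ) 2⁻¹) := by
      constructor
      · exact ((measurable_id.pow (measurable_const (a := -p))).aestronglyMeasurable)
      · rw [hasFiniteIntegral_iff_ofReal ?_]
        · exact hfin3
        · filter_upwards [ae_restrict_mem measurableSet_Ioo] with t ht
          exact rpow_nonneg ht.1.le _
    have := (intervalIntegral.integrableOn_Ioo_rpow_iff (by norm_num : (0:ℝ) < 2⁻¹)).1 hint
    linarith
  · intro hp1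
    have hb : ∀ t ∈ Set.Ioo (0:ℝ) 1,
        ENNReal.ofReal ((t⁻¹ - 1) ^ p) ≤ ENNReal.ofReal (t ^ (-p)) := by
      intro t ht
      apply ENNReal.ofReal_le_ofReal
      have ht0 : (0:ℝ) < t := ht.1
      have h1 : (1:ℝ) ≤ t⁻¹ := (one_le_inv₀ ht0).mpr ht.2.le
      calc (t⁻¹ - 1) ^ p ≤ (t⁻¹) ^ p :=
            Real.rpow_le_rpow (by linarith) (by linarith) hp.le
        _ = t ^ (-p) := by
            rw [Real.inv_rpow ht0.le, ← Real.rpow_neg ht0.le]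
    refine lt_of_le_of_lt (setLIntegral_mono (by fun_prop) hb) ?_
    exact lint_rpow_Ioo (by linarith)


lemma mul_lt_top_aux {c V K : ℝ≥0∞} (hc0 : c ≠ 0) (hct : c ≠ ⊤) (hV0 : V ≠ 0) (hVt : V ≠ ⊤) :
    c * (K * V) < ⊤ ↔ K < ⊤ := by
  rw [lt_top_iff_ne_top, lt_top_iff_ne_top]
  simp [ENNReal.mul_eq_top, hc0, hct, hV0, hVt]

theorem stmt13 (d : ℕ) (hd : 0 < d) (H₀ : ℝ) (H : Fin d → ℝ) (C : ℝ)
    (h0 : H₀ ∈ Set.Ioo (0:ℝ) 1) (hH : ∀ i, H i ∈ Set.Ioo (0:ℝ) 1) (hC : 0 < C) :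
    (∫⁻ ξ : EuclideanSpace ℝ (Fin d),
        ENNReal.ofReal ((1 + ‖ξ‖ ^ (4 * H₀))⁻¹ * (C * ∏ i, |ξ i| ^ (1 - 2 * H i))) < ⊤)
      ↔ (d : ℝ) < 2 * H₀ + ∑ i, H i := by
  classical
  have hβ : 0 < 4 * H₀ := by have := h0.1; linarith
  set E := EuclideanSpace ℝ (Fin d)
  set a : Fin d → ℝ := fun i => 1 - 2 * H i with ha_def
  have hane : ∀ i, -1 < a i := fun i => by have := (hH i).2; simp only [ha_def]; linarith
  set w : E → ℝ≥0∞ := fun ξ => ∏ i, ENNReal.ofReal (|ξ i| ^ a i) with hw_def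
  have hwm : Measurable w := meas_w a
  set s : ℝ := ∑ i, a i with hs_def
  have hds : 0 < (d:ℝ) + s := by
    have hlt : (-d : ℝ) < s := by
      haveI : Nonempty (Fin d) := Fin.pos_iff_nonempty.mp hd
      have hne : (Finset.univ : Finset (Fin d)).Nonempty := Finset.univ_nonempty
      calc (-d:ℝ) = ∑ _i : Fin d, (-1:ℝ) := by simp
        _ < ∑ i, a i := Finset.sum_lt_sum_of_nonempty hne (fun i _ => hane i)
    linarith
  set p : ℝ := ((d:ℝ) + s) / (4 * H₀) with hp_def
  have hp : 0 < p := div_pos hds hβ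
  set V := ∫⁻ ξ in Metric.ball (0:E) 1, w ξ with hV_def
  have hV0 : V ≠ 0 := by
    have := V_pos hd a
    simp only [hV_def, hw_def]
    exact this.ne'
  have hVt : V ≠ ⊤ := by
    have := V_lt_top a hane
    simp only [hV_def, hw_def]
    exact this.ne
  set K := ∫⁻ t in Set.Ioo (0:ℝ) 1, ENNReal.ofReal ((t⁻¹ - 1) ^ p) with hK_def
  have hgc : Continuous fun ξ : E => (1 + ‖ξ‖ ^ (4 * H₀))⁻¹ := by
    apply Continuous.inv₀
    · exact continuous_const.add (continuous_norm.rpow_const fun x => Or.inr hβ.le)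
    · intro x; positivity
  have hgm : Measurable fun ξ : E => ENNReal.ofReal ((1 + ‖ξ‖ ^ (4 * H₀))⁻¹) :=
    ENNReal.measurable_ofReal.comp hgc.measurable
  have key : (∫⁻ ξ : E,
      ENNReal.ofReal ((1 + ‖ξ‖ ^ (4 * H₀))⁻¹ * (C * ∏ i, |ξ i| ^ (1 - 2 * H i))))
      = ENNReal.ofReal C * (K * V) := by
    have hrw : ∀ ξ : E, ENNReal.ofReal ((1 + ‖ξ‖ ^ (4 * H₀))⁻¹ * (C * ∏ i, |ξ i| ^ (1 - 2 * H i)))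
        = ENNReal.ofReal C *
          ((w * fun ξ : E => ENNReal.ofReal ((1 + ‖ξ‖ ^ (4 * H₀))⁻¹)) ξ) := by
      intro ξ
      have h1 : (0:ℝ) ≤ (1 + ‖ξ‖ ^ (4 * H₀))⁻¹ := by positivity
      rw [ENNReal.ofReal_mul h1, ENNReal.ofReal_mul hC.le,
        ENNReal.ofReal_prod_of_nonneg (fun i _ => rpow_nonneg (abs_nonneg _) _)]
      simp only [Pi.mul_apply, hw_def, ha_def]
      ring
    simp only [hrw]
    rw [lintegral_const_mul' _ _ ENNReal.ofReal_ne_top]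
    congr 1
    rw [← lintegral_withDensity_eq_lintegral_mul volume hwm hgm]
    rw [lintegral_eq_lintegral_meas_lt _
      (Filter.Eventually.of_forall fun ξ => by positivity) hgc.measurable.aemeasurable]
    have hmeas_set : ∀ t ∈ Set.Ioo (0:ℝ) 1,
        (volume.withDensity w) {ξ : E | t < (1 + ‖ξ‖ ^ (4 * H₀))⁻¹}
          = ENNReal.ofReal ((t⁻¹ - 1) ^ p) * V := by
      intro t ht
      have hc : 0 < t⁻¹ - 1 := by
        have := (one_lt_inv₀ ht.1).mpr ht.2
        linarith
      have hset : {ξ : E | t < (1 + ‖ξ‖ ^ (4 * H₀))⁻¹}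
          = Metric.ball (0:E) ((t⁻¹ - 1) ^ (4 * H₀)⁻¹) := by
        ext ξ
        simp only [Set.mem_setOf_eq, Metric.mem_ball, dist_zero_right]
        have hb : (0:ℝ) < 1 + ‖ξ‖ ^ (4 * H₀) := by positivity
        rw [lt_inv_comm₀ ht.1 hb]
        constructor
        · intro h
          have h2 : ‖ξ‖ ^ (4 * H₀) < t⁻¹ - 1 := by linarith
          rw [← Real.rpow_inv_rpow hc.le hβ.ne' (x := t⁻¹ - 1)] at h2
          exact (Real.rpow_lt_rpow_iff (norm_nonneg ξ) (rpow_nonneg hc.le _) hβ).mp h2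
        · intro h
          have h2 : ‖ξ‖ ^ (4 * H₀) < ((t⁻¹ - 1) ^ (4 * H₀)⁻¹) ^ (4 * H₀) :=
            (Real.rpow_lt_rpow_iff (norm_nonneg ξ) (rpow_nonneg hc.le _) hβ).mpr h
          rw [Real.rpow_inv_rpow hc.le hβ.ne'] at h2
          linarith
      rw [hset, withDensity_apply _ Metric.isOpen_ball.measurableSet]
      have hsc := scaling a (R := (t⁻¹ - 1) ^ (4 * H₀)⁻¹) (rpow_pos_of_pos hc _)
      simp only [hw_def]
      rw [hsc]
      congr 2
      rw [← Real.rpow_mul hc.le]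
      congr 1
      rw [hp_def, hs_def]
      field_simp
    rw [← Set.Ioo_union_Ici_eq_Ioi (zero_lt_one (α := ℝ)),
      lintegral_union measurableSet_Ici
        (by
          rw [Set.disjoint_left]
          intro x hx hx'
          exact absurd (lt_of_lt_of_le hx.2 (le_refl 1)) (not_lt.mpr (mem_Ici.mp hx')))]
    have hIci : ∫⁻ t in Set.Ici (1:ℝ),
        (volume.withDensity w) {ξ : E | t < (1 + ‖ξ‖ ^ (4 * H₀))⁻¹} = 0 := by
      rw [setLIntegral_congr_fun measurableSet_Ici
        (fun t ht => ?_), lintegral_zero]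
      have hempty : {ξ : E | t < (1 + ‖ξ‖ ^ (4 * H₀))⁻¹} = (∅ : Set E) := by
        ext ξ
        simp only [Set.mem_setOf_eq, Set.mem_empty_iff_false, iff_false, not_lt]
        have hb : (0:ℝ) < 1 + ‖ξ‖ ^ (4 * H₀) := by positivity
        have : (1 + ‖ξ‖ ^ (4 * H₀))⁻¹ ≤ 1 := by
          rw [inv_le_one_iff₀]
          right
          have : (0:ℝ) ≤ ‖ξ‖ ^ (4 * H₀) := rpow_nonneg (norm_nonneg _) _
          linarith
        exact le_trans this ht
      simp [hempty]
    rw [hIci, add_zero,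
      setLIntegral_congr_fun measurableSet_Ioo
        (fun t ht => hmeas_set t ht),
      lintegral_mul_const _ (by fun_prop)]
  rw [key, mul_lt_top_aux (ENNReal.ofReal_pos.mpr hC).ne' ENNReal.ofReal_ne_top hV0 hVt,
    hK_def, K_iff hp, hp_def, div_lt_one hβ]
  have hsum : s = (d:ℝ) - 2 * ∑ i, H i := by
    rw [hs_def, ha_def]
    rw [Finset.sum_sub_distrib, Finset.sum_const, ← Finset.mul_sum]
    simp [Finset.card_univ]
  rw [hsum]
  constructor <;> intro <;> linarith
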